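/- Let k ≥ 2 and ℓ ≥ 1 be integers. If positive integers α_1, ..., α_k, β satisfy α_1^(1/ℓ) + ... + α_k^(1/ℓ) = β^(1/ℓ) (as real numbers), then there exist positive integers a_1, ..., a_k, b, c with c power-ℓ free (or c = 1) such that α_i = c·a_i^ℓ for each i, β = c·b^ℓ, and a_1 + ... + a_k = b. -/

import Mathlib

/-- `a` is power-`l` free: whenever `a = b ^ l * c`, we have `b = 1`. -/
def PowerFree (l a : ℕ) : Prop := ∀ b c : ℕ, a = b ^ l * c → b = 1

lemma exists_powerfree (l : ℕ) (hl : 1 ≤ l) : ∀ n : ℕ, 0 < n →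
    ∃ b c : ℕ, 0 < b ∧ 0 < c ∧ PowerFree l c ∧ n = c * b ^ l := by
  intro n
  induction n using Nat.strong_induction_on with
  | _ n ih =>
    intro hn
    by_cases h : PowerFree l n
    · exact ⟨1, n, one_pos, hn, h, by simp⟩
    · simp only [PowerFree, not_forall] at h
      obtain ⟨e, f, hef, he1⟩ := h
      have he0 : e ≠ 0 := by
        rintro rfl
        rw [zero_pow (by omega : l ≠ 0), zero_mul] at hef
        omega
      have he2 : 2 ≤ e := by omega
      have hf : 0 < f := by
        rcases Nat.eq_zero_or_pos f with rfl | hf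
        · simp [hef] at hn
        · exact hf
      have h2l : 2 ≤ e ^ l := by
        calc 2 = 2 ^ 1 := by norm_num
        _ ≤ 2 ^ l := Nat.pow_le_pow_right (by norm_num) hl
        _ ≤ e ^ l := Nat.pow_le_pow_left he2 l
      have hflt : f < n := by
        rw [hef]
        calc f < 2 * f := by omega
        _ ≤ e ^ l * f := Nat.mul_le_mul_right f h2l
      obtain ⟨b, c, hb, hc, hcf, rfl⟩ := ih f hflt hf
      exact ⟨e * b, c, by positivity, hc, hcf, by rw [hef]; ring⟩

lemma powerfree_factorization_lt {l c : ℕ} (hc : 0 < c) (h : PowerFree l c)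
    {p : ℕ} (hp : p.Prime) : c.factorization p < l := by
  by_contra hge
  push_neg at hge
  have hdvd : p ^ l ∣ c := (Nat.Prime.pow_dvd_iff_le_factorization hp hc.ne').mpr hge
  obtain ⟨d, hd⟩ := hdvd
  exact hp.one_lt.ne' (h p d hd)

lemma powerfree_unique {l : ℕ} (hl : 1 ≤ l) {c₁ b₁ c₂ b₂ : ℕ}
    (hc₁ : 0 < c₁) (hb₁ : 0 < b₁) (hc₂ : 0 < c₂) (hb₂ : 0 < b₂)
    (h₁ : PowerFree l c₁) (h₂ : PowerFree l c₂)
    (he : c₁ * b₁ ^ l = c₂ * b₂ ^ l) : c₁ = c₂ ∧ b₁ = b₂ := by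
  have hcc : c₁ = c₂ := by
    apply Nat.eq_of_factorization_eq hc₁.ne' hc₂.ne'
    intro p
    by_cases hp : p.Prime
    · have h1 : c₁.factorization p + l * b₁.factorization p
          = c₂.factorization p + l * b₂.factorization p := by
        have := congrArg (fun n : ℕ => n.factorization p) he
        simpa [Nat.factorization_mul hc₁.ne' (pow_pos hb₁ l).ne',
          Nat.factorization_mul hc₂.ne' (pow_pos hb₂ l).ne',
          Nat.factorization_pow] using this
      have l1 := powerfree_factorization_lt hc₁ h₁ hp
      have l2 := powerfree_factorization_lt hc₂ h₂ hp
      have := congrArg (fun n : ℕ => n % l) h1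
      simpa [Nat.mul_comm l, Nat.add_mul_mod_self_right,
        Nat.mod_eq_of_lt l1, Nat.mod_eq_of_lt l2] using this
    · simp [Nat.factorization_eq_zero_of_not_prime _ hp]
  refine ⟨hcc, ?_⟩
  subst hcc
  have : b₁ ^ l = b₂ ^ l := Nat.eq_of_mul_eq_mul_left hc₁ he
  exact Nat.pow_left_injective (by omega) this

lemma key_arith {l : ℕ} (hl : 1 ≤ l) {α β c b : ℕ} (hα : 0 < α) (hβ : 0 < β)
    (hc : 0 < c) (hb : 0 < b) (hcf : PowerFree l c) (hβd : β = c * b ^ l)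
    {q : ℚ} (hq : 0 < q) (he : (α : ℚ) = q ^ l * β) :
    ∃ a : ℕ, 0 < a ∧ α = c * a ^ l ∧ (a : ℚ) = q * b := by
  set u : ℕ := q.num.toNat with hu
  set v : ℕ := q.den with hv
  have hunum : (u : ℤ) = q.num := Int.toNat_of_nonneg (le_of_lt (Rat.num_pos.mpr hq))
  have hu0 : 0 < u := by
    have := Rat.num_pos.mpr hq
    omega
  have hv0 : 0 < v := q.pos
  have hquv : (q : ℚ) = (u : ℚ) / (v : ℚ) := by
    conv_lhs => rw [← Rat.num_div_den q]
    rw [← hunum]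
    push_cast
    rfl
  have hcop : Nat.Coprime u v := by
    have h := q.reduced
    have habs : q.num.natAbs = u := by
      rw [hu]; omega
    rwa [habs] at h
  -- natural number equation : α * v ^ l = u ^ l * β
  have hnat : α * v ^ l = u ^ l * β := by
    have hQ : (α : ℚ) * (v : ℚ) ^ l = (u : ℚ) ^ l * β := by
      rw [he, hquv]
      field_simp
      rw [div_pow, div_mul_cancel₀ _ (pow_ne_zero _ (by exact_mod_cast hv0.ne'))]
    exact_mod_cast hQ
  -- v ^ l ∣ β
  have hdvd : v ^ l ∣ β := by
    have h1 : v ^ l ∣ u ^ l * β := ⟨α, by rw [← hnat]; ring⟩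
    exact (Nat.Coprime.pow (k := v) (l := u) l l (Nat.Coprime.symm hcop)).dvd_of_dvd_mul_left h1
  obtain ⟨γ, hγ⟩ := hdvd
  have hγ0 : 0 < γ := by
    rcases Nat.eq_zero_or_pos γ with rfl | h
    · simp [hγ] at hβ
    · exact h
  have hαγ : α = u ^ l * γ := by
    have hveq : α * v ^ l = u ^ l * γ * v ^ l := by
      rw [hnat, hγ]; ring
    exact Nat.eq_of_mul_eq_mul_right (pow_pos hv0 l) hveq
  obtain ⟨g, c', hg0, hc'0, hc'f, hγd⟩ := exists_powerfree l hl γ hγ0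
  have hβ2 : β = c' * (v * g) ^ l := by rw [hγ, hγd]; ring
  obtain ⟨hceq, hbeq⟩ := powerfree_unique hl hc'0 (by positivity) hc hb hc'f hcf
    (hβ2.symm.trans hβd)
  refine ⟨u * g, by positivity, ?_, ?_⟩
  · rw [hαγ, hγd, ← hceq]; ring
  · rw [hquv, ← hbeq]
    push_cast
    field_simp


open Polynomial IntermediateField


-- If re z = abs z then z is the real number abs z
lemma complex_eq_of_re_eq_abs {z : ℂ} (h : z.re = ‖z‖) :
    z = (‖z‖ : ℝ) := by
  have h2 : (‖z‖) ^ 2 = z.re ^ 2 + z.im ^ 2 := by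
    rw [Complex.sq_norm, Complex.normSq_apply]; ring
  have him2 : z.im ^ 2 = 0 := by rw [← h] at h2; linarith
  have him : z.im = 0 := by
    have := sq_eq_zero_iff.mp him2
    exact this
  apply Complex.ext
  · simp [h]
  · simp [him]

lemma ratio_rational {k l : ℕ} (hl : 1 ≤ l) (α : Fin k → ℕ) (β : ℕ)
    (hα : ∀ i, 0 < α i) (hβ : 0 < β)
    (heq : ∑ i, ((α i : ℝ)) ^ ((1 : ℝ) / l) = (β : ℝ) ^ ((1 : ℝ) / l)) (i : Fin k) :
    ∃ q : ℚ, ((α i : ℝ)) ^ ((1 : ℝ) / l) = q * ((β : ℝ) ^ ((1 : ℝ) / l)) := by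
  have hl0 : (l : ℝ) ≠ 0 := by positivity
  set x : Fin k → ℝ := fun j => ((α j : ℝ)) ^ ((1 : ℝ) / l) with hxdef
  set y : ℝ := (β : ℝ) ^ ((1 : ℝ) / l) with hydef
  have hx0 : ∀ j, 0 < x j := fun j => Real.rpow_pos_of_pos (by exact_mod_cast hα j) _
  have hy0 : 0 < y := Real.rpow_pos_of_pos (by exact_mod_cast hβ) _
  have hxl : ∀ j, (x j) ^ l = (α j : ℝ) := by
    intro j
    rw [hxdef, ← Real.rpow_natCast (((α j : ℝ)) ^ ((1:ℝ)/l)) l,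
      ← Real.rpow_mul (by positivity), one_div_mul_cancel hl0, Real.rpow_one]
  have hyl : y ^ l = (β : ℝ) := by
    rw [hydef, ← Real.rpow_natCast (((β : ℝ)) ^ ((1:ℝ)/l)) l,
      ← Real.rpow_mul (by positivity), one_div_mul_cancel hl0, Real.rpow_one]
  -- the polynomial
  set P : ℚ[X] := (X ^ l - C (β : ℚ)) * ∏ j, (X ^ l - C ((α j : ℚ))) with hPdef
  have hmonic : P.Monic := by
    apply Polynomial.Monic.mul (Polynomial.monic_X_pow_sub_C _ (by omega))
    exact Polynomial.monic_prod_of_monic _ _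
      (fun j _ => Polynomial.monic_X_pow_sub_C _ (by omega))
  have hP0 : P ≠ 0 := hmonic.ne_zero
  have hsplits : (P.map (algebraMap ℚ ℂ)).Splits := IsAlgClosed.splits _
  set N : IntermediateField ℚ ℂ := IntermediateField.adjoin ℚ (P.rootSet ℂ) with hNdef
  haveI hSF : P.IsSplittingField ℚ N := adjoin_rootSet_isSplittingField hsplits
  haveI : FiniteDimensional ℚ N := Polynomial.IsSplittingField.finiteDimensional N P
  haveI : Normal ℚ N := Normal.of_isSplittingField P
  haveI : IsGalois ℚ N := {}
  -- membership of roots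
  have hxm : ∀ j, ((x j : ℂ)) ∈ N := by
    intro j
    apply IntermediateField.subset_adjoin
    rw [Polynomial.mem_rootSet]
    refine ⟨hP0, ?_⟩
    rw [hPdef]
    simp only [map_mul, map_prod, map_sub, map_pow, aeval_X, aeval_C]
    apply mul_eq_zero_of_right
    apply Finset.prod_eq_zero (Finset.mem_univ j)
    have : ((x j : ℂ)) ^ l = ((α j : ℕ) : ℂ) := by
      rw [← Complex.ofReal_pow, hxl j]; push_cast; ring
    rw [this]
    push_cast
    ring
  have hym : ((y : ℂ)) ∈ N := by
    apply IntermediateField.subset_adjoin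
    rw [Polynomial.mem_rootSet]
    refine ⟨hP0, ?_⟩
    rw [hPdef]
    simp only [map_mul, map_prod, map_sub, map_pow, aeval_X, aeval_C]
    apply mul_eq_zero_of_left
    have : ((y : ℂ)) ^ l = ((β : ℕ) : ℂ) := by
      rw [← Complex.ofReal_pow, hyl]; push_cast; ring
    rw [this]
    push_cast
    ring
  set X' : Fin k → N := fun j => ⟨(x j : ℂ), hxm j⟩ with hX'def
  set Y' : N := ⟨(y : ℂ), hym⟩ with hY'def
  have hsum : ∑ j, X' j = Y' := by
    apply Subtype.ext
    push_cast
    rw [← Complex.ofReal_sum]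
    exact congrArg (Complex.ofReal) heq
  have hXpow : ∀ j, (X' j) ^ l = algebraMap ℚ N ((α j : ℚ)) := by
    intro j
    apply Subtype.ext
    push_cast
    rw [← Complex.ofReal_pow, hxl j]
    norm_num
  have hYpow : Y' ^ l = algebraMap ℚ N ((β : ℚ)) := by
    apply Subtype.ext
    push_cast
    rw [← Complex.ofReal_pow, hyl]
    norm_num
  -- fixed by all automorphisms
  have hfixed : ∀ σ : N ≃ₐ[ℚ] N, σ (X' i / Y') = X' i / Y' := by
    intro σ
    set z : Fin k → ℂ := fun j => ((σ (X' j) : N) : ℂ) with hzdef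
    set w : ℂ := ((σ Y' : N) : ℂ) with hwdef
    have hzl : ∀ j, z j ^ l = ((α j : ℕ) : ℂ) := by
      intro j
      have h1 : σ (X' j) ^ l = algebraMap ℚ N ((α j : ℚ)) := by
        rw [← map_pow, hXpow j, AlgEquiv.commutes]
      have h2 : N.val (σ (X' j) ^ l) = N.val (algebraMap ℚ N ((α j : ℚ))) := by rw [h1]
      rw [map_pow, eq_ratCast (algebraMap ℚ N), map_ratCast, ← eq_ratCast (algebraMap ℚ ℂ)] at h2
      rw [hzdef]
      simp only [IntermediateField.val_mk] at h2 ⊢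
      rw [show ((σ (X' j) : N) : ℂ) = N.val (σ (X' j)) from rfl, h2]
      push_cast
      ring
    have hwl : w ^ l = ((β : ℕ) : ℂ) := by
      have h1 : σ Y' ^ l = algebraMap ℚ N ((β : ℚ)) := by
        rw [← map_pow, hYpow, AlgEquiv.commutes]
      have h2 : N.val (σ Y' ^ l) = N.val (algebraMap ℚ N ((β : ℚ))) := by rw [h1]
      rw [map_pow, eq_ratCast (algebraMap ℚ N), map_ratCast, ← eq_ratCast (algebraMap ℚ ℂ)] at h2
      rw [hwdef]
      rw [show ((σ Y' : N) : ℂ) = N.val (σ Y') from rfl, h2]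
      push_cast
      ring
    have habsz : ∀ j, ‖z j‖ = x j := by
      intro j
      have h1 : (‖z j‖) ^ l = (x j) ^ l := by
        rw [← norm_pow, hzl j, hxl j]
        simp [Complex.norm_natCast]
      exact (pow_left_inj₀ (norm_nonneg _) (le_of_lt (hx0 j)) (by omega)).mp h1
    have habsw : ‖w‖ = y := by
      have h1 : (‖w‖) ^ l = y ^ l := by
        rw [← norm_pow, hwl, hyl]
        simp [Complex.norm_natCast]
      exact (pow_left_inj₀ (norm_nonneg _) hy0.le (by omega)).mp h1
    have hwsum : ∑ j, z j = w := by
      have h1 : σ (∑ j, X' j) = σ Y' := by rw [hsum]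
      have h2 : N.val (σ (∑ j, X' j)) = N.val (σ Y') := by rw [h1]
      rw [map_sum σ, map_sum N.val] at h2
      exact h2
    have hre_le : ∀ j, (z j * (starRingEnd ℂ) w).re ≤ x j * y := by
      intro j
      calc (z j * (starRingEnd ℂ) w).re ≤ ‖z j * (starRingEnd ℂ) w‖ :=
            Complex.re_le_norm _
        _ = x j * y := by rw [norm_mul, habsz j, Complex.norm_conj, habsw]
    have hsum_re : ∑ j, (z j * (starRingEnd ℂ) w).re = y * y := by
      have h1 : (∑ j, z j * (starRingEnd ℂ) w) = w * (starRingEnd ℂ) w := by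
        rw [← Finset.sum_mul, hwsum]
      have h2 := congrArg Complex.re h1
      rw [Complex.re_sum] at h2
      rw [h2, Complex.mul_conj]
      simp only [Complex.ofReal_re]
      rw [Complex.normSq_eq_norm_sq, habsw]
      ring
    have hxysum : ∑ j, x j * y = y * y := by
      rw [← Finset.sum_mul, heq]
    have heach : ∀ j, (z j * (starRingEnd ℂ) w).re = x j * y := by
      intro j
      by_contra hne
      have hlt : ∑ j, (z j * (starRingEnd ℂ) w).re < ∑ j, x j * y :=
        Finset.sum_lt_sum (fun t _ => hre_le t)
          ⟨j, Finset.mem_univ _, lt_of_le_of_ne (hre_le j) hne⟩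
      rw [hsum_re, hxysum] at hlt
      exact lt_irrefl _ hlt
    have hzw : ∀ j, z j * (starRingEnd ℂ) w = ((x j * y : ℝ) : ℂ) := by
      intro j
      have habs : ‖z j * (starRingEnd ℂ) w‖ = x j * y := by
        rw [norm_mul, habsz j, Complex.norm_conj, habsw]
      have h1 := complex_eq_of_re_eq_abs (z := z j * (starRingEnd ℂ) w)
        (by rw [heach j, habs])
      rw [h1, habs]
    have hw0 : w ≠ 0 := by
      intro h0
      rw [h0] at habsw
      simp at habsw
      exact hy0.ne' habsw.symm
    have hzi : z i = ((x i / y : ℝ) : ℂ) * w := by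
      have h1 : z i * ((starRingEnd ℂ) w * w) = ((x i * y : ℝ) : ℂ) * w := by
        rw [← mul_assoc, hzw i]
      have h2 : (starRingEnd ℂ) w * w = ((y * y : ℝ) : ℂ) := by
        rw [mul_comm, Complex.mul_conj, Complex.normSq_eq_norm_sq, habsw]
        push_cast
        ring
      rw [h2] at h1
      have hyy : ((y * y : ℝ) : ℂ) ≠ 0 := by
        push_cast
        exact mul_ne_zero (by exact_mod_cast hy0.ne') (by exact_mod_cast hy0.ne')
      have hyC : ((y : ℝ) : ℂ) ≠ 0 := by exact_mod_cast hy0.ne'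
      have h3 : z i * (((y:ℝ):ℂ) * ((y:ℝ):ℂ))
          = (((x i / y : ℝ)):ℂ) * w * (((y:ℝ):ℂ) * ((y:ℝ):ℂ)) := by
        push_cast at h1 ⊢
        rw [h1]
        field_simp
        try ring
      exact mul_right_cancel₀ (mul_ne_zero hyC hyC) h3
    -- conclude σ fixes X' i / Y'
    apply Subtype.coe_injective
    show ((σ (X' i / Y') : N) : ℂ) = ((X' i / Y' : N) : ℂ)
    have hcoe1 : ((σ (X' i / Y') : N) : ℂ) = z i / w := by
      rw [map_div₀ σ]
      exact map_div₀ N.val (σ (X' i)) (σ Y')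
    have hcoe2 : ((X' i / Y' : N) : ℂ) = (x i : ℂ) / (y : ℂ) := by
      exact map_div₀ N.val (X' i) Y'
    rw [hcoe1, hcoe2, hzi]
    have hyC : ((y : ℝ) : ℂ) ≠ 0 := by exact_mod_cast hy0.ne'
    push_cast
    field_simp
  -- X' i / Y' is in the fixed field of ⊤, hence in ⊥
  have hmem : X' i / Y' ∈ IntermediateField.fixedField (⊤ : Subgroup (N ≃ₐ[ℚ] N)) := by
    rintro ⟨σ, -⟩
    exact hfixed σ
  have htf := IsGalois.tfae (F := ℚ) (E := ↥N)
  have hbot := (List.TFAE.out htf 0 1 rfl rfl).mp inferInstance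
  rw [hbot, IntermediateField.mem_bot] at hmem
  obtain ⟨q, hq⟩ := hmem
  refine ⟨q, ?_⟩
  have hq2 := congrArg N.val hq
  rw [map_div₀, eq_ratCast (algebraMap ℚ N), map_ratCast, ← eq_ratCast (algebraMap ℚ ℂ)] at hq2
  have hq3 : (q : ℂ) = (x i : ℂ) / (y : ℂ) := by
    rw [show (q : ℂ) = algebraMap ℚ ℂ q from (eq_ratCast (algebraMap ℚ ℂ) q).symm]
    exact hq2
  have hyC : ((y : ℝ) : ℂ) ≠ 0 := by exact_mod_cast hy0.ne'
  rw [eq_div_iff hyC] at hq3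
  have h5 : ((((q : ℝ) * y : ℝ)) : ℂ) = ((x i : ℝ) : ℂ) := by
    push_cast at hq3 ⊢
    linear_combination hq3
  have h6 : (q : ℝ) * y = x i := by exact_mod_cast h5
  show x i = (q : ℝ) * y
  exact h6.symm


theorem solutions_fractional (k l : ℕ) (hk : 2 ≤ k) (hl : 1 ≤ l)
    (α : Fin k → ℕ) (β : ℕ) (hα : ∀ i, 0 < α i) (hβ : 0 < β)
    (heq : ∑ i, ((α i : ℝ)) ^ ((1 : ℝ) / l) = (β : ℝ) ^ ((1 : ℝ) / l)) :
    ∃ (a : Fin k → ℕ) (b c : ℕ), (∀ i, 0 < a i) ∧ 0 < b ∧ 0 < c ∧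
      PowerFree l c ∧ (∀ i, α i = c * (a i) ^ l) ∧ β = c * b ^ l ∧
      ∑ i, a i = b := by
  have hl0 : (l : ℝ) ≠ 0 := by positivity
  obtain ⟨b, c, hb, hc, hcf, hβd⟩ := exists_powerfree l hl β hβ
  choose q hq using fun i => ratio_rational hl α β hα hβ heq i
  set y : ℝ := (β : ℝ) ^ ((1 : ℝ) / l) with hydef
  have hy0 : 0 < y := Real.rpow_pos_of_pos (by exact_mod_cast hβ) _
  have hx0 : ∀ i, (0:ℝ) < ((α i : ℝ)) ^ ((1 : ℝ) / l) :=
    fun i => Real.rpow_pos_of_pos (by exact_mod_cast hα i) _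
  have hyl : y ^ l = (β : ℝ) := by
    rw [hydef, ← Real.rpow_natCast (((β : ℝ)) ^ ((1:ℝ)/l)) l,
      ← Real.rpow_mul (by positivity), one_div_mul_cancel hl0, Real.rpow_one]
  have hxl : ∀ i, (((α i : ℝ)) ^ ((1 : ℝ) / l)) ^ l = (α i : ℝ) := by
    intro i
    rw [← Real.rpow_natCast (((α i : ℝ)) ^ ((1:ℝ)/l)) l,
      ← Real.rpow_mul (by positivity), one_div_mul_cancel hl0, Real.rpow_one]
  have hq0 : ∀ i, 0 < q i := by
    intro i
    have h1 : (0:ℝ) < (q i : ℝ) * y := by rw [← hq i]; exact hx0 i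
    have h2 : (0:ℝ) < (q i : ℝ) := by nlinarith [hy0, h1]
    exact_mod_cast h2
  have hqe : ∀ i, (α i : ℚ) = q i ^ l * β := by
    intro i
    have h1 : (α i : ℝ) = ((q i : ℝ)) ^ l * (β : ℝ) := by
      rw [← hxl i, hq i, mul_pow, hyl]
    exact_mod_cast h1
  choose a ha0 ha1 ha2 using fun i =>
    key_arith hl (hα i) hβ hc hb hcf hβd (hq0 i) (hqe i)
  have hsumq : ∑ i, q i = 1 := by
    have hR : (∑ i, (q i : ℝ)) * y = y := by
      rw [Finset.sum_mul]
      calc ∑ i, (q i : ℝ) * y = ∑ i, ((α i : ℝ)) ^ ((1 : ℝ) / l) :=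
            Finset.sum_congr rfl fun i _ => (hq i).symm
        _ = y := heq
    have h1 : (∑ i, (q i : ℝ)) = 1 :=
      mul_right_cancel₀ hy0.ne' (hR.trans (one_mul y).symm)
    exact_mod_cast h1
  have hsum : ∑ i, a i = b := by
    have h1 : (∑ i, (a i : ℚ)) = (b : ℚ) := by
      calc (∑ i, (a i : ℚ)) = ∑ i, q i * b := Finset.sum_congr rfl fun i _ => ha2 i
      _ = (∑ i, q i) * b := by rw [Finset.sum_mul]
      _ = (b : ℚ) := by rw [hsumq, one_mul]
    exact_mod_cast h1
  exact ⟨a, b, c, ha0, hb, hc, hcf, ha1, hβd, hsum⟩
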